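/- In the affine Weyl group Ŵ = W ⋉ T of type C_{n+k}, with T the translation subgroup, the set Ŵ_t^1 = {w ∈ Ŵ : w^{-1}(Δ̂_t^+) ⊂ Δ̂^+} equals W_t^1: every element of Ŵ_t^1 has trivial translation part. -/
import Mathlib


/-- Standard basis vector `e_i` of `ℤ^N`. -/
def eZ (N : ℕ) (i : Fin N) : Fin N → ℤ :=
  fun j => if j = i then 1 else 0

/-- The positive roots of type `C_N`. -/
def posRoots (N : ℕ) : Set (Fin N → ℤ) :=
  {v | ∃ i j : Fin N,
    (i < j ∧ v = eZ N i - eZ N j) ∨ (i ≤ j ∧ v = eZ N i + eZ N j)}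

/-- The positive roots of `t = sp_{2n} ⊕ sp_{2k} ⊂ sp_{2(n+k)}`. -/
def posRootsT (n k : ℕ) : Set (Fin (n + k) → ℤ) :=
  {v | ∃ i j : Fin (n + k),
    (((i : ℕ) < n ∧ (j : ℕ) < n) ∨ (n ≤ (i : ℕ) ∧ n ≤ (j : ℕ))) ∧
    ((i < j ∧ v = eZ (n + k) i - eZ (n + k) j) ∨
      (i ≤ j ∧ v = eZ (n + k) i + eZ (n + k) j))}

/-- The positive affine roots of type `C_N`, encoded as pairs `(β, m)` standing for
`β + mδ`: the positive imaginary roots `(0, m)`, `m > 0`, together with the positive real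
roots `β + mδ` with `β ∈ Δ` and (`m > 0`, or `m = 0` and `β ∈ Δ⁺`). -/
def affPos (N : ℕ) : Set ((Fin N → ℤ) × ℤ) :=
  {p | (p.1 = 0 ∧ 0 < p.2) ∨
    ((p.1 ∈ posRoots N ∨ -p.1 ∈ posRoots N) ∧
      (0 < p.2 ∨ (p.2 = 0 ∧ p.1 ∈ posRoots N)))}

/-- The positive affine roots of the subalgebra `t = sp_{2n} ⊕ sp_{2k}`. -/
def affPosT (n k : ℕ) : Set ((Fin (n + k) → ℤ) × ℤ) :=
  {p | (p.1 = 0 ∧ 0 < p.2) ∨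
    ((p.1 ∈ posRootsT n k ∨ -p.1 ∈ posRootsT n k) ∧
      (0 < p.2 ∨ (p.2 = 0 ∧ p.1 ∈ posRootsT n k)))}

/-- Action of `w⁻¹` for the signed permutation `w = (σ, ε)` on `ℤ^N`. -/
def invAct (N : ℕ) (σ : Equiv.Perm (Fin N)) (ε : Fin N → ℤˣ) (v : Fin N → ℤ) :
    Fin N → ℤ :=
  fun l => (ε l : ℤ) * v (σ l)

/-- `Ŵ_t^1 = W_t^1`: if an element `ŵ = w ∘ t_μ` of the affine Weyl group `Ŵ = W ⋉ T` of
type `C_{n+k}` (with `w = (σ, ε)` a signed permutation and `t_μ` the translation by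
`μ ∈ ℤ^{n+k}`, so that `ŵ⁻¹(β + mδ) = w⁻¹β + (m + ⟨w⁻¹β, μ⟩)δ`) maps all positive affine
roots of `t = sp_{2n} ⊕ sp_{2k}` under `ŵ⁻¹` into the positive affine roots, then its
translation part is trivial, `μ = 0`, and `w ∈ W_t^1`. -/
theorem affine_WT1_eq_finite (n k : ℕ) (σ : Equiv.Perm (Fin (n + k)))
    (ε : Fin (n + k) → ℤˣ) (μ : Fin (n + k) → ℤ)
    (h : ∀ p ∈ affPosT n k,
      (invAct (n + k) σ ε p.1,
        p.2 + ∑ i, invAct (n + k) σ ε p.1 i * μ i) ∈ affPos (n + k)) :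
    μ = 0 ∧ ∀ v ∈ posRootsT n k, invAct (n + k) σ ε v ∈ posRoots (n + k) := by

  have hμ : μ = 0 := by
    funext l
    set i := σ l with hi
    have hblk : (((i : ℕ) < n ∧ (i : ℕ) < n) ∨ (n ≤ (i : ℕ) ∧ n ≤ (i : ℕ))) := by
      rcases Nat.lt_or_ge (i : ℕ) n with h' | h'
      · exact Or.inl ⟨h', h'⟩
      · exact Or.inr ⟨h', h'⟩
    have hpos : eZ (n + k) i + eZ (n + k) i ∈ posRootsT n k :=
      ⟨i, i, hblk, Or.inr ⟨le_refl i, rfl⟩⟩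
    have hmem1 : ((eZ (n + k) i + eZ (n + k) i, 1) : (Fin (n + k) → ℤ) × ℤ) ∈ affPosT n k :=
      Or.inr ⟨Or.inl hpos, Or.inl one_pos⟩
    have hmem2 : ((-(eZ (n + k) i + eZ (n + k) i), 1) : (Fin (n + k) → ℤ) × ℤ) ∈ affPosT n k :=
      Or.inr ⟨Or.inr (by rw [neg_neg]; exact hpos), Or.inl one_pos⟩
    have hne : ∀ m : Fin (n + k), m ≠ l → σ m ≠ i := by
      intro m hm hc
      exact hm (σ.injective (by rw [hc, hi]))
    have hsum : (∑ m, invAct (n + k) σ ε (eZ (n + k) i + eZ (n + k) i) m * μ m)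
        = 2 * ((ε l : ℤ) * μ l) := by
      rw [Fintype.sum_eq_single l]
      · simp [invAct, eZ, ← hi]
        ring
      · intro m hm
        simp [invAct, eZ, hne m hm]
    have hsum2 : (∑ m, invAct (n + k) σ ε (-(eZ (n + k) i + eZ (n + k) i)) m * μ m)
        = -(2 * ((ε l : ℤ) * μ l)) := by
      rw [Fintype.sum_eq_single l]
      · simp [invAct, eZ, ← hi]
        ring
      · intro m hm
        simp [invAct, eZ, hne m hm]
    have hq : invAct (n + k) σ ε (eZ (n + k) i + eZ (n + k) i) ≠ 0 := by
      intro hc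
      have := congrFun hc l
      simp [invAct, eZ, ← hi] at this
    have h1 := h _ hmem1
    have h2 := h _ hmem2
    simp only [affPos, Set.mem_setOf_eq, hsum, hsum2] at h1 h2
    set c : ℤ := (ε l : ℤ) * μ l with hc
    have hc1 : 0 < 1 + 2 * c := by
      rcases h1 with ⟨h0, _⟩ | ⟨_, hp⟩
      · exact absurd h0 hq
      · rcases hp with hp | ⟨hp, _⟩
        · exact hp
        · omega
    have hc2 : 0 < 1 + -(2 * c) := by
      rcases h2 with ⟨h0, _⟩ | ⟨_, hp⟩
      · exact absurd (by simpa using congrFun h0 l) (by simp [invAct, eZ, ← hi])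
      · rcases hp with hp | ⟨hp, _⟩
        · exact hp
        · omega
    have hc0 : c = 0 := by omega
    rw [hc] at hc0
    show μ l = (0 : Fin (n + k) → ℤ) l
    rcases Int.units_eq_one_or (ε l) with he | he <;> rw [he] at hc0 <;>
      simpa using hc0
  refine ⟨hμ, ?_⟩
  intro v hv
  have := h (v, 0) (Or.inr ⟨Or.inl hv, Or.inr ⟨rfl, hv⟩⟩)
  simp only [affPos, Set.mem_setOf_eq, hμ, Pi.zero_apply, mul_zero,
    Finset.sum_const_zero, add_zero] at this
  rcases this with ⟨_, h0⟩ | ⟨_, hp | ⟨_, hp⟩⟩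
  · exact absurd h0 (lt_irrefl 0)
  · exact absurd hp (lt_irrefl 0)
  · exact hp
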